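/- Let M ≥ 2 be an integer. For every real vector w = (w_0,…,w_M) with w_0 = w_M = 0, one has Σ_{i=0}^{M−1} (w_{i+1} − w_i)² ≥ 4 sin²(π/(2M)) · Σ_{i=1}^{M−1} w_i². Equivalently, the minimum eigenvalue of the discrete Dirichlet Laplacian −Δ_h, where (Δ_h w)_i = (w_{i−1} − 2w_i + w_{i+1})/h², on the grid of mesh size h = 1/M is λ₀ = (4/h²)·sin²(π/(2M)). -/

import Mathlib

open Finset Real

/-- Discrete Poincaré inequality with sharp constant: for any `w` with
`w₀ = w_M = 0`, `Σ_{i=0}^{M−1}(w_{i+1} − w_i)² ≥ 4 sin²(π/(2M)) Σ_{i=1}^{M−1} w_i²`;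
equivalently, the minimal eigenvalue of the discrete Dirichlet Laplacian on mesh
size `h = 1/M` is `λ₀ = (4/h²) sin²(π/(2M))`. -/
theorem discrete_poincare_inequality
    (M : ℕ) (hM : 2 ≤ M) (w : ℕ → ℝ) (hw0 : w 0 = 0) (hwM : w M = 0) :
    ∑ i ∈ Finset.range M, (w (i + 1) - w i) ^ 2 ≥
      4 * Real.sin (Real.pi / (2 * (M : ℝ))) ^ 2 * ∑ i ∈ Finset.Ico 1 M, w i ^ 2 := by
  have hM0 : (0:ℝ) < M := by positivity
  set θ : ℝ := Real.pi / M with hθdef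
  have hθpos : 0 < θ := by positivity
  set c : ℝ := Real.cos θ with hcdef
  set s : ℕ → ℝ := fun i => Real.sin (i * θ) with hsdef
  set v : ℕ → ℝ := fun i => if 1 ≤ i ∧ i < M then w i / s i else 0 with hvdef
  have hs0 : s 0 = 0 := by simp [hsdef]
  have hsM : s M = 0 := by
    have : (M:ℝ) * θ = Real.pi := by rw [hθdef]; field_simp
    simp [hsdef, this]
  have hsnn : ∀ i : ℕ, i ≤ M → 0 ≤ s i := by
    intro i hi
    apply Real.sin_nonneg_of_nonneg_of_le_pi
    · positivity
    · have : (i:ℝ) ≤ M := by exact_mod_cast hi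
      calc (i:ℝ) * θ ≤ M * θ := by nlinarith
        _ = Real.pi := by rw [hθdef]; field_simp
  have hspos : ∀ i : ℕ, 1 ≤ i → i < M → 0 < s i := by
    intro i h1 h2
    apply Real.sin_pos_of_pos_of_lt_pi
    · have : (1:ℝ) ≤ i := by exact_mod_cast h1
      nlinarith
    · have : (i:ℝ) < M := by exact_mod_cast h2
      calc (i:ℝ) * θ < M * θ := by nlinarith
        _ = Real.pi := by rw [hθdef]; field_simp
  have hwv : ∀ i : ℕ, i ≤ M → w i = s i * v i := by
    intro i hi
    by_cases h : 1 ≤ i ∧ i < M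
    · have hs : s i ≠ 0 := ne_of_gt (hspos i h.1 h.2)
      simp only [hvdef, if_pos h]
      field_simp
    · push_neg at h
      rcases Nat.lt_or_ge i 1 with h0 | h1
      · interval_cases i
        simp [hvdef, hw0]
      · have : i = M := le_antisymm hi (h h1)
        subst this
        simp [hvdef, hwM, hsM]
  have hrec : ∀ i : ℕ, s i + s (i+2) = 2 * c * s (i+1) := by
    intro i
    have h1 : ((i:ℝ)+2) * θ = ((i:ℝ)+1) * θ + θ := by ring
    have h2 : (i:ℝ) * θ = ((i:ℝ)+1) * θ - θ := by ring
    simp only [hsdef]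
    push_cast
    rw [h1, h2, Real.sin_add, Real.sin_sub]
    ring
  -- abbreviations
  set F : ℕ → ℝ := fun i => s i * (s i - s (i+1)) * v i ^ 2 with hF
  set G : ℕ → ℝ := fun i => s (i+1) * (s (i+1) - s i) * v (i+1) ^ 2 with hG
  have hterm : ∀ i ∈ Finset.range M,
      (w (i+1) - w i) ^ 2 - s i * s (i+1) * (v (i+1) - v i) ^ 2 = G i + F i := by
    intro i hi
    rw [Finset.mem_range] at hi
    rw [hwv i (le_of_lt hi), hwv (i+1) hi]
    simp only [hF, hG]
    ring
  have hMsplit : M - 1 + 1 = M := by omega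
  have hkey : ∑ i ∈ Finset.range M, ((w (i+1) - w i) ^ 2 - s i * s (i+1) * (v (i+1) - v i) ^ 2)
      = (2 - 2*c) * ∑ i ∈ Finset.Ico 1 M, w i ^ 2 := by
    rw [Finset.sum_congr rfl hterm, Finset.sum_add_distrib]
    have hGsum : ∑ i ∈ Finset.range M, G i
        = ∑ i ∈ Finset.range (M-1), G i + G (M-1) := by
      rw [← Finset.sum_range_succ, hMsplit]
    have hFsum : ∑ i ∈ Finset.range M, F i
        = ∑ i ∈ Finset.range (M-1), F (i+1) + F 0 := by
      rw [← Finset.sum_range_succ', hMsplit]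
    have hGtop : G (M-1) = 0 := by
      simp only [hG, hMsplit, hsM]; ring
    have hF0 : F 0 = 0 := by simp only [hF, hs0]; ring
    rw [hGsum, hFsum, hGtop, hF0, add_zero, add_zero, ← Finset.sum_add_distrib]
    have hA : ∑ i ∈ Finset.Ico 1 M, w i ^ 2 = ∑ i ∈ Finset.range (M-1), w (1+i) ^ 2 := by
      rw [Finset.sum_Ico_eq_sum_range]
    rw [hA, Finset.mul_sum]
    apply Finset.sum_congr rfl
    intro i hi
    rw [Finset.mem_range] at hi
    have hi1 : i + 1 < M := by omega
    have hrw : w (i+1) = s (i+1) * v (i+1) := hwv (i+1) (le_of_lt hi1)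
    have h2 : s i + s (i+2) = 2 * c * s (i+1) := hrec i
    have : G i + F (i+1) = s (i+1) * v (i+1)^2 * (2 * s (i+1) - (s i + s (i+2))) := by
      simp only [hG, hF]; ring
    rw [this, h2]
    have : (1:ℕ) + i = i + 1 := by ring
    rw [this, hrw]
    ring
  have hnn : 0 ≤ ∑ i ∈ Finset.range M, s i * s (i+1) * (v (i+1) - v i) ^ 2 := by
    apply Finset.sum_nonneg
    intro i hi
    rw [Finset.mem_range] at hi
    have h1 : 0 ≤ s i := hsnn i (le_of_lt hi)
    have h2 : 0 ≤ s (i+1) := hsnn (i+1) hi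
    positivity
  have hconst : 4 * Real.sin (Real.pi / (2 * (M:ℝ))) ^ 2 = 2 - 2*c := by
    have h2 : θ = 2 * (Real.pi / (2 * (M:ℝ))) := by
      rw [hθdef]; field_simp
    rw [hcdef, h2, Real.cos_two_mul]
    have := Real.sin_sq_add_cos_sq (Real.pi / (2 * (M:ℝ)))
    nlinarith [this]
  rw [Finset.sum_sub_distrib] at hkey
  have hA0 : 0 ≤ ∑ i ∈ Finset.Ico 1 M, w i ^ 2 := Finset.sum_nonneg fun i _ => sq_nonneg _
  rw [ge_iff_le, hconst]
  nlinarith [hkey, hnn]
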